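/- arXiv:2602.10296 — 3 statements merged into one kernel-verified Lean document; each statement's English description precedes it below -/
import Mathlib

section
/- Let α, β ∈ ℝ^m with α ≤ β coordinatewise, ε ≥ 0, and let f : B(α,β) → B(α,β,±ε) be a continuous nonexpansive map with respect to the ℓ∞-norm. Then there exists x ∈ B(α,β) with ‖f(x) - x‖∞ ≤ ε. -/
theorem eps_fixed_point_exists_generalized_nonexpansive
    (m : ℕ) (α β : Fin m → ℝ) (hαβ : ∀ i, α i ≤ β i) (ε : ℝ) (hε : 0 ≤ ε)
    (f : (Fin m → ℝ) → (Fin m → ℝ))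
    (hcont : ContinuousOn f (Set.Icc α β))
    (hmap : ∀ x ∈ Set.Icc α β, ∀ i, α i - ε ≤ f x i ∧ f x i ≤ β i + ε)
    (hnonexp : ∀ x ∈ Set.Icc α β, ∀ y ∈ Set.Icc α β, ‖f x - f y‖ ≤ ‖x - y‖) :
    ∃ x ∈ Set.Icc α β, ‖f x - x‖ ≤ ε := by
  classical
  set S : Set (Fin m → ℝ) := Set.Icc α β with hS
  have hαS : α ∈ S := Set.mem_Icc.mpr ⟨le_refl _, fun i => hαβ i⟩
  set g : (Fin m → ℝ) → Fin m → ℝ := fun x i => max (α i) (min (β i) (f x i)) with hg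
  have hg_mem : ∀ x, g x ∈ S := by
    intro x
    refine Set.mem_Icc.mpr ⟨fun i => le_max_left _ _, fun i => ?_⟩
    exact max_le (hαβ i) (min_le_left _ _)
  have hg_cont : ContinuousOn g S := by
    apply continuousOn_pi.mpr
    intro i
    have houter : Continuous fun r : ℝ => max (α i) (min (β i) r) :=
      continuous_const.max (continuous_const.min continuous_id)
    exact houter.comp_continuousOn ((continuous_apply i).comp_continuousOn hcont)
  have hg_nonexp : ∀ x ∈ S, ∀ y ∈ S, ‖g x - g y‖ ≤ ‖x - y‖ := by
    intro x hx y hy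
    have h1 : ‖f x - f y‖ ≤ ‖x - y‖ := hnonexp x hx y hy
    refine (pi_norm_le_iff_of_nonneg (le_trans (norm_nonneg _) h1)).mpr fun i => ?_
    have h2 : ‖f x i - f y i‖ ≤ ‖f x - f y‖ := by
      simpa using norm_le_pi_norm (f x - f y) i
    have h3 : |g x i - g y i| ≤ |f x i - f y i| := by
      calc |max (α i) (min (β i) (f x i)) - max (α i) (min (β i) (f y i))|
          ≤ |min (β i) (f x i) - min (β i) (f y i)| := by
            simpa [max_comm] using abs_max_sub_max_le_abs (min (β i) (f x i)) (min (β i) (f y i)) (α i)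
        _ ≤ |f x i - f y i| := by
            have := abs_min_sub_min_le_max (β i) (f x i) (β i) (f y i)
            simpa using this
    calc ‖g x i - g y i‖ = |g x i - g y i| := rfl
      _ ≤ |f x i - f y i| := h3
      _ ≤ ‖f x - f y‖ := h2
      _ ≤ ‖x - y‖ := h1
  -- compactness
  have hScompact : IsCompact S := by
    rw [hS, ← Set.pi_univ_Icc]
    exact isCompact_univ_pi fun i => isCompact_Icc
  have hSclosed : IsClosed S := isClosed_Icc
  -- approximate fixed points of g
  have key : ∀ δ > (0:ℝ), ∃ x ∈ S, ‖g x - x‖ ≤ δ := by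
    intro δ hδ
    set M : ℝ := ‖β - α‖ with hM
    have hM0 : 0 ≤ M := norm_nonneg _
    obtain ⟨s, hs_pos, hs_le1, hs_le⟩ :
        ∃ s : ℝ, 0 < s ∧ s ≤ 1 ∧ s ≤ δ / (M + 1) :=
      ⟨min 1 (δ / (M + 1)), lt_min one_pos (div_pos hδ (by linarith)),
        min_le_left _ _, min_le_right _ _⟩
    set t : ℝ := 1 - s with ht
    have ht0 : 0 ≤ t := by simp only [ht]; linarith
    have ht1 : t < 1 := by simp only [ht]; linarith
    haveI : Nonempty S := ⟨⟨α, hαS⟩⟩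
    haveI : CompleteSpace S := hSclosed.completeSpace_coe
    have hconv : ∀ x : Fin m → ℝ, x ∈ S → (1 - t) • α + t • g x ∈ S := by
      intro x hx
      have hgx := hg_mem x
      refine Set.mem_Icc.mpr ⟨fun i => ?_, fun i => ?_⟩
      · have h1 : α i ≤ g x i := hgx.1 i
        have : (1 - t) * α i + t * α i ≤ (1 - t) * α i + t * g x i := by nlinarith
        simpa [Pi.add_apply, Pi.smul_apply, smul_eq_mul] using by nlinarith [this]
      · have h2 : g x i ≤ β i := hgx.2 i
        have hαβi := hαβ i
        simp only [Pi.add_apply, Pi.smul_apply, smul_eq_mul]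
        nlinarith
    set h : S → S := fun x => ⟨(1 - t) • α + t • g x.1, hconv x.1 x.2⟩ with hh
    have hlip : LipschitzWith ⟨t, ht0⟩ h := by
      apply LipschitzWith.of_dist_le_mul
      intro x y
      have hd : dist (h x) (h y) = ‖((1 - t) • α + t • g x.1) - ((1 - t) • α + t • g y.1)‖ := by
        rw [Subtype.dist_eq, dist_eq_norm]
      rw [hd]
      have : ((1 - t) • α + t • g x.1) - ((1 - t) • α + t • g y.1) = t • (g x.1 - g y.1) := by
        ext i; simp [Pi.add_apply, Pi.smul_apply, smul_eq_mul]; ring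
      rw [this, norm_smul]
      have : dist (x : S) y = ‖x.1 - y.1‖ := by rw [Subtype.dist_eq, dist_eq_norm]
      rw [this]
      have := hg_nonexp x.1 x.2 y.1 y.2
      have habs : ‖t‖ = t := by rw [Real.norm_eq_abs, abs_of_nonneg ht0]
      rw [habs]
      change t * ‖g x.1 - g y.1‖ ≤ t * ‖x.1 - y.1‖
      exact mul_le_mul_of_nonneg_left this ht0
    have hcontr : ContractingWith ⟨t, ht0⟩ h := ⟨by exact_mod_cast ht1, hlip⟩
    set x : S := hcontr.fixedPoint h with hxdef
    have hfix : h x = x := hcontr.fixedPoint_isFixedPt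
    refine ⟨x.1, x.2, ?_⟩
    have hx : (1 - t) • α + t • g x.1 = x.1 := congrArg Subtype.val hfix
    have hdiff : g x.1 - x.1 = (1 - t) • (g x.1 - α) := by
      ext i
      have hi := congrFun hx i
      simp only [Pi.add_apply, Pi.smul_apply, smul_eq_mul] at hi
      simp only [Pi.sub_apply, Pi.smul_apply, smul_eq_mul]
      linarith
    rw [hdiff, norm_smul]
    have hbnd : ‖g x.1 - α‖ ≤ M := by
      have hgx := hg_mem x.1
      refine (pi_norm_le_iff_of_nonneg hM0).mpr fun i => ?_
      have h1 : α i ≤ g x.1 i := hgx.1 i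
      have h2 : g x.1 i ≤ β i := hgx.2 i
      have : ‖(β - α) i‖ ≤ M := norm_le_pi_norm (β - α) i
      simp only [Pi.sub_apply, Real.norm_eq_abs] at this ⊢
      rw [abs_of_nonneg (by linarith)]
      rw [abs_of_nonneg (by linarith [hαβ i])] at this
      linarith
    have h1t : ‖(1 - t : ℝ)‖ = s := by
      rw [Real.norm_eq_abs, abs_of_nonneg (by simp only [ht]; linarith)]
      simp [ht]
    rw [h1t]
    calc s * ‖g x.1 - α‖ ≤ (δ / (M + 1)) * M :=
          mul_le_mul hs_le hbnd (norm_nonneg _) (le_of_lt (div_pos hδ (by linarith)))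
      _ ≤ δ := by
          rw [div_mul_eq_mul_div, div_le_iff₀ (by linarith : (0:ℝ) < M + 1)]
          nlinarith
  -- exact fixed point of g via minimum
  have hSne : S.Nonempty := ⟨α, hαS⟩
  have hφcont : ContinuousOn (fun x => ‖g x - x‖) S := (hg_cont.sub continuousOn_id).norm
  obtain ⟨x₀, hx₀S, hmin⟩ := hScompact.exists_isMinOn hSne hφcont
  have hzero : ‖g x₀ - x₀‖ ≤ 0 := by
    refine le_of_forall_pos_le_add fun δ hδ => ?_
    obtain ⟨y, hyS, hy⟩ := key δ hδ
    have := hmin hyS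
    simp only [Set.mem_setOf_eq] at this
    calc ‖g x₀ - x₀‖ ≤ ‖g y - y‖ := this
      _ ≤ δ := hy
      _ = 0 + δ := by ring
  have hfixed : g x₀ = x₀ := by
    have h0 : ‖g x₀ - x₀‖ = 0 := le_antisymm hzero (norm_nonneg _)
    exact sub_eq_zero.mp (norm_eq_zero.mp h0)
  refine ⟨x₀, hx₀S, ?_⟩
  have hfg : ∀ i, |f x₀ i - g x₀ i| ≤ ε := by
    intro i
    obtain ⟨hl, hu⟩ := hmap x₀ hx₀S i
    have hαβi := hαβ i
    rcases le_total (f x₀ i) (α i) with hc | hc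
    · have : g x₀ i = α i := by
        simp only [hg]
        rw [min_eq_right (le_trans hc hαβi), max_eq_left hc]
      rw [this, abs_le]; constructor <;> linarith
    · rcases le_total (β i) (f x₀ i) with hc2 | hc2
      · have : g x₀ i = β i := by
          simp only [hg]
          rw [min_eq_left hc2, max_eq_right hαβi]
        rw [this, abs_le]; constructor <;> linarith
      · have : g x₀ i = f x₀ i := by
          simp only [hg]
          rw [min_eq_right hc2, max_eq_right hc]
        rw [this]; simpa using hε
  have : ‖f x₀ - x₀‖ = ‖f x₀ - g x₀‖ := by rw [hfixed]
  rw [this]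
  exact (pi_norm_le_iff_of_nonneg hε).mpr fun i => by
    simpa [Real.norm_eq_abs] using hfg i
end

section
/- Let k ≥ 2, 0 < γ < 1, ε > 0, and f : [0,1]^k → [0,1]^k a (1-γ)-contraction under the ℓ₁-norm with fixed point x*. Suppose x ∈ [0,1]^k satisfies ‖f(x)-x‖₁ > ε and Σ_{j=3}^{k} |f(x)_j - x_j| ≤ εγ/4, and suppose |f(x)_1 - x_1| ≥ |f(x)_2 - x_2| and f(x)_1 > x_1. Then x*_1 > x_1 + εγ/8. -/
theorem weakly_dominating_coordinate
    (k : ℕ) (γ ε : ℝ) (hγ0 : 0 < γ) (hγ1 : γ < 1) (hε : 0 < ε)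
    (f : (Fin (k + 2) → ℝ) → (Fin (k + 2) → ℝ))
    (hmap : ∀ x ∈ Set.Icc (0 : Fin (k + 2) → ℝ) 1, f x ∈ Set.Icc (0 : Fin (k + 2) → ℝ) 1)
    (hcontr : ∀ x ∈ Set.Icc (0 : Fin (k + 2) → ℝ) 1, ∀ y ∈ Set.Icc (0 : Fin (k + 2) → ℝ) 1,
      ∑ i, |f x i - f y i| ≤ (1 - γ) * ∑ i, |x i - y i|)
    (xstar : Fin (k + 2) → ℝ) (hxstar : xstar ∈ Set.Icc (0 : Fin (k + 2) → ℝ) 1)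
    (hfix : f xstar = xstar)
    (x : Fin (k + 2) → ℝ) (hx : x ∈ Set.Icc (0 : Fin (k + 2) → ℝ) 1)
    (hfar : ∑ i, |f x i - x i| > ε)
    (htail : ∑ j ∈ Finset.univ.filter (fun j : Fin (k + 2) => 2 ≤ (j : ℕ)), |f x j - x j| ≤ ε * γ / 4)
    (hdom : |f x 0 - x 0| ≥ |f x 1 - x 1|)
    (hup : f x 0 > x 0) :
    xstar 0 > x 0 + ε * γ / 8 := by
  by_contra hcon
  push_neg at hcon
  have hB : ∑ i, |f x i - xstar i| ≤ (1 - γ) * ∑ i, |x i - xstar i| := by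
    have h := hcontr x hx xstar hxstar
    rwa [hfix] at h
  set A := ∑ i, |x i - xstar i| with hAdef
  set B := ∑ i, |f x i - xstar i| with hBdef
  have hA0 : 0 ≤ A := Finset.sum_nonneg fun i _ => abs_nonneg _
  -- ε < B + A
  have htriA : ∑ i, |f x i - x i| ≤ B + A := by
    rw [hBdef, hAdef, ← Finset.sum_add_distrib]
    apply Finset.sum_le_sum
    intro i _
    calc |f x i - x i| ≤ |f x i - xstar i| + |xstar i - x i| := abs_sub_le _ _ _
      _ = |f x i - xstar i| + |x i - xstar i| := by rw [abs_sub_comm (xstar i)]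
  have hAbig : ε / 2 < A := by nlinarith [mul_nonneg hγ0.le hA0]
  -- per-coordinate triangle bound
  have tri : ∀ j : Fin (k + 2), |x j - xstar j| - |f x j - xstar j| ≤ |f x j - x j| := by
    intro j
    have h1 : |x j - xstar j| - |f x j - xstar j| ≤ |(x j - xstar j) - (f x j - xstar j)| :=
      abs_sub_abs_le_abs_sub _ _
    have e : (x j - xstar j) - (f x j - xstar j) = x j - f x j := by ring
    rw [e, abs_sub_comm (x j) (f x j)] at h1
    exact h1
  -- split the sum
  have hsplit : A - B = ∑ i, (|x i - xstar i| - |f x i - xstar i|) := by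
    rw [hAdef, hBdef, Finset.sum_sub_distrib]
  have hfilt := Finset.sum_filter_add_sum_filter_not Finset.univ
      (fun j : Fin (k + 2) => 2 ≤ (j : ℕ))
      (fun i => |x i - xstar i| - |f x i - xstar i|)
  have hS : Finset.univ.filter (fun j : Fin (k + 2) => ¬ 2 ≤ (j : ℕ)) = {0, 1} := by
    ext j
    simp only [Finset.mem_filter, Finset.mem_univ, true_and, Finset.mem_insert, Finset.mem_singleton, Fin.ext_iff, Fin.val_zero, Fin.val_one]
    omega
  have hne : (0 : Fin (k + 2)) ≠ 1 := by
    simp [Fin.ext_iff]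
  have htailbound : ∑ j ∈ Finset.univ.filter (fun j : Fin (k + 2) => 2 ≤ (j : ℕ)),
      (|x j - xstar j| - |f x j - xstar j|) ≤ ε * γ / 4 :=
    le_trans (Finset.sum_le_sum fun j _ => tri j) htail
  have hpairsum : ∑ j ∈ Finset.univ.filter (fun j : Fin (k + 2) => ¬ 2 ≤ (j : ℕ)),
      (|x j - xstar j| - |f x j - xstar j|)
      = (|x 0 - xstar 0| - |f x 0 - xstar 0|) + (|x 1 - xstar 1| - |f x 1 - xstar 1|) := by
    rw [hS, Finset.sum_pair hne]
  have hdom' : |f x 1 - x 1| ≤ f x 0 - x 0 := by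
    rwa [abs_of_pos (sub_pos.2 hup)] at hdom
  have h1tri := tri 1
  have hpair : (|x 0 - xstar 0| - |f x 0 - xstar 0|) + (|x 1 - xstar 1| - |f x 1 - xstar 1|)
      ≤ ε * γ / 4 := by
    have hd : 0 < ε * γ := mul_pos hε hγ0
    rcases abs_cases (x 0 - xstar 0) with ⟨e1, _⟩ | ⟨e1, h1'⟩ <;>
      rcases abs_cases (f x 0 - xstar 0) with ⟨e2, _⟩ | ⟨e2, h2'⟩ <;>
      rw [e1, e2] <;> linarith
  have hdiff : A - B ≤ ε * γ / 2 := by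
    rw [hsplit, ← hfilt, hpairsum]
    linarith
  have hgB : γ * A ≤ A - B := by linarith
  nlinarith [mul_lt_mul_of_pos_left hAbig hγ0]
end

section
/- Let f : [0,1]^k → [0,1]^k be a (1-γ)-contraction under ℓ₁ with fixed point x*, and x ∈ [0,1]^k with ‖f(x)-x‖₁ > ε, Σ_{j=3}^{k}|f(x)_j - x_j| ≤ εγ/4, |f(x)_1 - x_1| ≥ |f(x)_2 - x_2|, f(x)_1 > x_1, and x*_1 ≤ x_1 + εγ/8. Then ‖x - x*‖₁ - ‖f(x) - x*‖₁ ≤ εγ/2. -/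
theorem key_inequality_lemma42
    (k : ℕ) (γ ε : ℝ) (hγ0 : 0 < γ) (hγ1 : γ < 1) (hε : 0 < ε)
    (f : (Fin (k + 2) → ℝ) → (Fin (k + 2) → ℝ))
    (hmap : ∀ x ∈ Set.Icc (0 : Fin (k + 2) → ℝ) 1, f x ∈ Set.Icc (0 : Fin (k + 2) → ℝ) 1)
    (hcontr : ∀ x ∈ Set.Icc (0 : Fin (k + 2) → ℝ) 1, ∀ y ∈ Set.Icc (0 : Fin (k + 2) → ℝ) 1,
      ∑ i, |f x i - f y i| ≤ (1 - γ) * ∑ i, |x i - y i|)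
    (xstar : Fin (k + 2) → ℝ) (hxstar : xstar ∈ Set.Icc (0 : Fin (k + 2) → ℝ) 1)
    (hfix : f xstar = xstar)
    (x : Fin (k + 2) → ℝ) (hx : x ∈ Set.Icc (0 : Fin (k + 2) → ℝ) 1)
    (hfar : ∑ i, |f x i - x i| > ε)
    (htail : ∑ j ∈ Finset.univ.filter (fun j : Fin (k + 2) => 2 ≤ (j : ℕ)), |f x j - x j| ≤ ε * γ / 4)
    (hdom : |f x 0 - x 0| ≥ |f x 1 - x 1|)
    (hup : f x 0 > x 0)
    (hassume : xstar 0 ≤ x 0 + ε * γ / 8) :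
    (∑ i, |x i - xstar i|) - ∑ i, |f x i - xstar i| ≤ ε * γ / 2 := by
  have hne : (0 : Fin (k + 2)) ≠ 1 := by
    simp [Fin.ext_iff]
  have hsplit : ∀ g : Fin (k + 2) → ℝ, ∑ i, g i
      = g 0 + g 1 + ∑ j ∈ Finset.univ.filter (fun j : Fin (k + 2) => 2 ≤ (j : ℕ)), g j := by
    intro g
    have hset : (Finset.univ.filter (fun j : Fin (k + 2) => ¬ 2 ≤ (j : ℕ))) = {0, 1} := by
      ext j
      simp only [Finset.mem_filter, Finset.mem_univ, true_and, Finset.mem_insert,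
        Finset.mem_singleton, Fin.ext_iff, Fin.val_zero, Fin.val_one]
      omega
    have h := Finset.sum_filter_add_sum_filter_not Finset.univ
      (fun j : Fin (k + 2) => 2 ≤ (j : ℕ)) g
    rw [hset, Finset.sum_pair hne] at h
    linarith
  have hεγ : 0 < ε * γ := mul_pos hε hγ0
  have hεγ2 : ε * γ < ε := by nlinarith
  have hfar' := hfar
  rw [hsplit (fun i => |f x i - x i|)] at hfar'
  have h01 : |f x 0 - x 0| + |f x 1 - x 1| > ε - ε * γ / 4 := by linarith
  have habs0 : |f x 0 - x 0| = f x 0 - x 0 := abs_of_pos (by linarith)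
  have hbig : f x 0 - x 0 > ε * γ / 8 := by nlinarith
  have hfx0ge : (0:ℝ) ≤ f x 0 - xstar 0 := by linarith
  have hterm0 : |x 0 - xstar 0| - |f x 0 - xstar 0| ≤ ε * γ / 4 - (f x 0 - x 0) := by
    rw [abs_of_nonneg hfx0ge]
    rcases abs_cases (x 0 - xstar 0) with ⟨h, _⟩ | ⟨h, _⟩ <;> linarith
  have habs_sub : ∀ j : Fin (k + 2),
      |x j - xstar j| - |f x j - xstar j| ≤ |f x j - x j| := by
    intro j
    have h := abs_sub_abs_le_abs_sub (x j - xstar j) (f x j - xstar j)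
    rw [show x j - xstar j - (f x j - xstar j) = -(f x j - x j) by ring, abs_neg] at h
    exact h
  have htailsum : ∑ j ∈ Finset.univ.filter (fun j : Fin (k + 2) => 2 ≤ (j : ℕ)),
      (|x j - xstar j| - |f x j - xstar j|) ≤ ε * γ / 4 :=
    le_trans (Finset.sum_le_sum fun j _ => habs_sub j) htail
  rw [Finset.sum_sub_distrib] at htailsum
  have h1 := habs_sub 1
  rw [hsplit (fun i => |x i - xstar i|), hsplit (fun i => |f x i - xstar i|)]
  linarith
end
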